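/- For matrices J, R ∈ ℂ^{n×n} with R Hermitian positive semi-definite and J skew-Hermitian, and m ∈ ℕ, the condition ∑_{j=0}^m J^j R (J^H)^j > 0 holds if and only if ⋂_{j=0}^m ker(R^{1/2} J^j) = {0}, where R^{1/2} is the positive semi-definite square root of R. -/

import Mathlib

open scoped Matrix ComplexOrder

/-- The square root of a positive semi-definite matrix, as defined in Mathlib (Dec 2024),
since removed from Mathlib. -/
noncomputable def Matrix.PosSemidef.sqrt {n 𝕜 : Type*} [Fintype n] [DecidableEq n] [RCLike 𝕜]
    {A : Matrix n n 𝕜} (hA : A.PosSemidef) : Matrix n n 𝕜 :=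
  (hA.1.eigenvectorUnitary : Matrix n n 𝕜) *
    Matrix.diagonal (((↑) : ℝ → 𝕜) ∘ (√·) ∘ hA.1.eigenvalues) *
    (star hA.1.eigenvectorUnitary : Matrix n n 𝕜)

lemma Matrix.PosSemidef.sqrtDef_isHermitian {n 𝕜 : Type*} [Fintype n] [DecidableEq n] [RCLike 𝕜]
    {A : Matrix n n 𝕜} (hA : A.PosSemidef) : hA.sqrtᴴ = hA.sqrt := by
  unfold Matrix.PosSemidef.sqrt
  simp [Matrix.conjTranspose_mul, Matrix.diagonal_conjTranspose, Matrix.mul_assoc, ← Matrix.star_eq_conjTranspose]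
  congr 2
  rw [Matrix.star_eq_conjTranspose, Matrix.diagonal_conjTranspose]
  congr 1
  ext i
  simp

lemma Matrix.PosSemidef.sqrtDef_mul_self {n 𝕜 : Type*} [Fintype n] [DecidableEq n] [RCLike 𝕜]
    {A : Matrix n n 𝕜} (hA : A.PosSemidef) : hA.sqrt * hA.sqrt = A := by
  unfold Matrix.PosSemidef.sqrt
  conv_rhs => rw [hA.1.spectral_theorem]
  have h := Unitary.coe_star_mul_self hA.1.eigenvectorUnitary
  rw [Unitary.conjStarAlgAut_apply]
  simp only [Matrix.mul_assoc]
  rw [← Matrix.mul_assoc (star (hA.1.eigenvectorUnitary : Matrix n n 𝕜)), h, Matrix.one_mul,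
    ← Matrix.mul_assoc (Matrix.diagonal _), Matrix.diagonal_mul_diagonal]
  congr 3
  ext i
  simp only [Function.comp_apply]
  rw [← RCLike.ofReal_mul, Real.mul_self_sqrt (hA.eigenvalues_nonneg i)]

open Matrix

/-- Lemma 2.2 (B3) ↔ (B2): `∑_{j=0}^m J^j R (Jᴴ)^j > 0` iff
`⋂_{j=0}^m ker (R^{1/2} J^j) = {0}`. -/
theorem stmt_1 {n : ℕ} (J R : Matrix (Fin n) (Fin n) ℂ) (m : ℕ)
    (hR : R.PosSemidef) (hJ : Jᴴ = -J) :
    (∑ j ∈ Finset.range (m + 1), J ^ j * R * (Jᴴ) ^ j).PosDef ↔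
      (⨅ j ∈ Finset.range (m + 1),
        LinearMap.ker (Matrix.mulVecLin (hR.sqrt * J ^ j))) = ⊥ := by
  have hterm : ∀ j, J ^ j * R * Jᴴ ^ j = (hR.sqrt * Jᴴ ^ j)ᴴ * (hR.sqrt * Jᴴ ^ j) := by
    intro j
    conv_rhs => rw [conjTranspose_mul, conjTranspose_pow, conjTranspose_conjTranspose,
      show hR.sqrtᴴ = hR.sqrt from hR.sqrtDef_isHermitian, Matrix.mul_assoc (J ^ j),
      ← Matrix.mul_assoc hR.sqrt, hR.sqrtDef_mul_self, ← Matrix.mul_assoc]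
  have hsum : (∑ j ∈ Finset.range (m + 1), J ^ j * R * (Jᴴ) ^ j)
      = ∑ j ∈ Finset.range (m + 1), (hR.sqrt * Jᴴ ^ j)ᴴ * (hR.sqrt * Jᴴ ^ j) :=
    Finset.sum_congr rfl fun j _ => hterm j
  have hS : (∑ j ∈ Finset.range (m + 1), J ^ j * R * (Jᴴ) ^ j).PosSemidef := by
    rw [hsum]
    refine Finset.sum_induction _ _ (fun a b ha hb => ha.add hb) ?_
      (fun j _ => posSemidef_conjTranspose_mul_self _)
    exact Matrix.PosSemidef.zero
  have hBequiv : ∀ (j : ℕ) (x : Fin n → ℂ),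
      (hR.sqrt * Jᴴ ^ j) *ᵥ x = 0 ↔ (hR.sqrt * J ^ j) *ᵥ x = 0 := by
    intro j x
    rcases Nat.even_or_odd j with h | h
    · rw [hJ, h.neg_pow]
    · rw [hJ, h.neg_pow, Matrix.mul_neg, Matrix.neg_mulVec, neg_eq_zero]
  have hkey : ∀ x, (∑ j ∈ Finset.range (m + 1), J ^ j * R * (Jᴴ) ^ j) *ᵥ x = 0 ↔
      ∀ j ∈ Finset.range (m + 1), (hR.sqrt * J ^ j) *ᵥ x = 0 := by
    intro x
    have smv : ∀ (s : Finset ℕ) (f : ℕ → Matrix (Fin n) (Fin n) ℂ),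
        (∑ j ∈ s, f j) *ᵥ x = ∑ j ∈ s, f j *ᵥ x := by
      intro s f
      induction s using Finset.induction with
      | empty => simp
      | insert _ _ h ih => rw [Finset.sum_insert h, Finset.sum_insert h, Matrix.add_mulVec, ih]
    have dps : ∀ (s : Finset ℕ) (g : ℕ → Fin n → ℂ),
        star x ⬝ᵥ (∑ j ∈ s, g j) = ∑ j ∈ s, star x ⬝ᵥ g j := by
      intro s g
      induction s using Finset.induction with
      | empty => simp
      | insert _ _ h ih => rw [Finset.sum_insert h, Finset.sum_insert h, dotProduct_add, ih]
    rw [← hS.dotProduct_mulVec_zero_iff, hsum, smv, dps]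
    have hterm' : ∀ j, star x ⬝ᵥ ((hR.sqrt * Jᴴ ^ j)ᴴ * (hR.sqrt * Jᴴ ^ j)) *ᵥ x
        = star ((hR.sqrt * Jᴴ ^ j) *ᵥ x) ⬝ᵥ ((hR.sqrt * Jᴴ ^ j) *ᵥ x) := by
      intro j
      rw [← Matrix.mulVec_mulVec, Matrix.dotProduct_mulVec, Matrix.vecMul_conjTranspose,
        star_star]
    simp_rw [hterm']
    rw [Finset.sum_eq_zero_iff_of_nonneg (fun j _ => dotProduct_star_self_nonneg _)]
    exact forall₂_congr fun j _ => by
      rw [dotProduct_star_self_eq_zero, hBequiv]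
  rw [Submodule.eq_bot_iff]
  constructor
  · intro hpd x hx
    simp only [Submodule.mem_iInf, LinearMap.mem_ker, Matrix.mulVecLin_apply] at hx
    by_contra hx0
    have h1 := (hkey x).mpr hx
    have h2 := hpd.dotProduct_mulVec_pos hx0
    rw [h1, dotProduct_zero] at h2
    exact lt_irrefl _ h2
  · intro hker
    refine .of_dotProduct_mulVec_pos hS.1 fun x hx0 => ?_
    rcases eq_or_lt_of_le (hS.dotProduct_mulVec_nonneg x) with heq | hlt
    · exfalso
      apply hx0
      apply hker x
      simp only [Submodule.mem_iInf, LinearMap.mem_ker, Matrix.mulVecLin_apply]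
      exact (hkey x).mp ((hS.dotProduct_mulVec_zero_iff x).mp heq.symm)
    · exact hlt
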